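/- Let g₄ be the 4-dimensional 3-Lie algebra over K with basis e1, e2, e3, e4 and only nonvanishing basis bracket [e2,e3,e4] = e1 (up to skew-symmetry), with the adjoint action ad(x,y)z = [x,y,z] of g₄ on itself. Let H : g₄ → g₄ be the linear map with H(e_j) = Σ_{i=1}^{4} a_{ij} e_i for scalars a_{ij} ∈ K. Then H is a crossed homomorphism from g₄ to g₄ with respect to ad if and only if a_{21} = a_{31} = a_{41} = 0 and a_{11} = a_{22} + a_{33} + a_{44} + a_{23}a_{34}a_{42} + a_{24}a_{32}a_{43} + a_{22}a_{33}a_{44} − a_{24}a_{33}a_{42} − a_{22}a_{34}a_{43} − a_{23}a_{32}a_{44}. -/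

import Mathlib

/-- The bracket of the 4-dimensional 3-Lie algebra `g₄` on `Fin 4 → K`
(basis `e₁ = Pi.single 0 1`, …, `e₄ = Pi.single 3 1`), trilinear, totally
skew-symmetric, and determined by `[e₂,e₃,e₄] = e₁` with all other basis
brackets vanishing. -/
def g4br (K : Type*) [Field K] (x y z : Fin 4 → K) : Fin 4 → K :=
  Matrix.det !![x 1, x 2, x 3; y 1, y 2, y 3; z 1, z 2, z 3] •
    (Pi.single (0 : Fin 4) (1 : K) : Fin 4 → K)

private lemma g4br_eq (K : Type*) [Field K] (x y z : Fin 4 → K) :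
    g4br K x y z =
      (x 1 * (y 2 * z 3 - y 3 * z 2) - x 2 * (y 1 * z 3 - y 3 * z 1)
        + x 3 * (y 1 * z 2 - y 2 * z 1)) •
        (Pi.single (0 : Fin 4) (1 : K) : Fin 4 → K) := by
  rw [g4br, Matrix.det_fin_three]
  norm_num
  congr 1
  simp [Matrix.vecHead, Matrix.vecTail]
  ring

/-- Let `H : g₄ → g₄` be the linear map with matrix `a` in the
basis `e₁,…,e₄` (so `H eⱼ = Σᵢ aᵢⱼ eᵢ`, i.e. `H = Matrix.toLin' a`; note the
index shift: the paper's `a_{ij}` is `a (i-1) (j-1)`).  Then `H` is a crossed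
homomorphism from `g₄` to itself with respect to the adjoint action
`ad(x,y)z = [x,y,z]` if and only if `a₂₁ = a₃₁ = a₄₁ = 0` and
`a₁₁ = a₂₂ + a₃₃ + a₄₄ + a₂₃a₃₄a₄₂ + a₂₄a₃₂a₄₃ + a₂₂a₃₃a₄₄ − a₂₄a₃₃a₄₂ −
a₂₂a₃₄a₄₃ − a₂₃a₃₂a₄₄`. -/
theorem g4_crossedHom_iff (K : Type*) [Field K] [CharZero K]
    (a : Matrix (Fin 4) (Fin 4) K) :
    (∀ x y z : Fin 4 → K,
        Matrix.toLin' a (g4br K x y z) =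
          g4br K x y (Matrix.toLin' a z) + g4br K y z (Matrix.toLin' a x) +
            g4br K z x (Matrix.toLin' a y) +
              g4br K (Matrix.toLin' a x) (Matrix.toLin' a y) (Matrix.toLin' a z)) ↔
      (a 1 0 = 0 ∧ a 2 0 = 0 ∧ a 3 0 = 0 ∧
        a 0 0 = a 1 1 + a 2 2 + a 3 3
          + a 1 2 * a 2 3 * a 3 1 + a 1 3 * a 2 1 * a 3 2 + a 1 1 * a 2 2 * a 3 3
          - a 1 3 * a 2 2 * a 3 1 - a 1 1 * a 2 3 * a 3 2 - a 1 2 * a 2 1 * a 3 3) := by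
  have key : ∀ (w : Fin 4 → K) (k : Fin 4),
      Matrix.toLin' a w k = a k 0 * w 0 + a k 1 * w 1 + a k 2 * w 2 + a k 3 * w 3 := by
    intro w k
    simp [Matrix.toLin'_apply, Matrix.mulVec, dotProduct, Fin.sum_univ_four]
  simp only [g4br_eq]
  constructor
  · intro h
    have h234 := h (Pi.single 1 1) (Pi.single 2 1) (Pi.single 3 1)
    have h1 := congrFun h234 1
    have h2 := congrFun h234 2
    have h3 := congrFun h234 3
    have h0 := congrFun h234 0
    simp [key, Pi.single_apply] at h0 h1 h2 h3
    refine ⟨h1, h2, h3, ?_⟩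
    linear_combination h0
  · rintro ⟨h1, h2, h3, h0⟩
    intro x y z
    have hsingle : Matrix.toLin' a (Pi.single (0 : Fin 4) (1 : K)) =
        a 0 0 • (Pi.single (0 : Fin 4) (1 : K) : Fin 4 → K) := by
      funext k
      fin_cases k <;> simp [key, Pi.single_apply, h1, h2, h3]
    rw [map_smul, hsingle, smul_smul, ← add_smul, ← add_smul, ← add_smul]
    congr 1
    simp only [key]
    simp only [h1, h2, h3, h0]
    ring
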